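/- Let 0 < α₁ ≤ α₂, let Q₁, Q₂, M₁, M₂ be n×n real symmetric positive semidefinite matrices, and let N₁, N₂ be n×n real symmetric positive definite matrices such that (α₁/2)·(Q₁+N₁)⁻¹ + M₁ = (α₂/2)·(Q₁+N₂)⁻¹ + M₂. Define Ñ₁ := ((Q₁+N₁)⁻¹ + (2/α₁)·M₁)⁻¹ − Q₁ and Ñ₂ := ((Q₁+N₂)⁻¹ + (2/α₂)·M₂)⁻¹ − Q₁. Then: (i) Ñ₁ ⪯ N₁ and Ñ₂ ⪯ N₂; (ii) Ñ₁ ⪯ Ñ₂; (iii) if Q₁·M₁ = 0 then det(Q₁+Ñ₁)·det(N₁) = det(Q₁+N₁)·det(Ñ₁); (iv) if Q₂·M₂ = 0 then det(Q₁+Q₂+Ñ₂)·det(Q₁+N₂) = det(Q₁+Q₂+N₂)·det(Q₁+Ñ₂). -/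

import Mathlib

open Matrix

/-- A nonnegative real scalar multiple of a PSD matrix is PSD. -/
lemma psd_smul_aux {n : ℕ} {A : Matrix (Fin n) (Fin n) ℝ} (hA : A.PosSemidef)
    {c : ℝ} (hc : 0 ≤ c) : (c • A).PosSemidef := by
  refine ⟨?_, fun x => ?_⟩
  · have hAT : Aᵀ = A := by simpa using hA.1.eq
    unfold Matrix.IsHermitian
    rw [conjTranspose_smul]
    simp [hAT]
  · exact (hA.smul hc).2 x

/-- Loewner-order antitonicity of matrix inversion on positive definite matrices. -/
lemma inv_antitone_aux {n : ℕ} {A B : Matrix (Fin n) (Fin n) ℝ}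
    (hA : A.PosDef) (hB : B.PosDef) (hAB : (B - A).PosSemidef) :
    (A⁻¹ - B⁻¹).PosSemidef := by
  have hdA : IsUnit A.det := (Matrix.isUnit_iff_isUnit_det _).1 hA.isUnit
  have hdB : IsUnit B.det := (Matrix.isUnit_iff_isUnit_det _).1 hB.isUnit
  have h1 : B⁻¹ * (B - A) * A⁻¹ = A⁻¹ - B⁻¹ := by
    rw [Matrix.mul_sub, Matrix.nonsing_inv_mul B hdB, Matrix.sub_mul, Matrix.one_mul,
      Matrix.mul_assoc, Matrix.mul_nonsing_inv A hdA, Matrix.mul_one]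
  have h2 : A⁻¹ * (B - A) * B⁻¹ = A⁻¹ - B⁻¹ := by
    rw [Matrix.mul_sub, Matrix.nonsing_inv_mul A hdA, Matrix.sub_mul, Matrix.one_mul,
      Matrix.mul_assoc, Matrix.mul_nonsing_inv B hdB, Matrix.mul_one]
  have key : A⁻¹ - B⁻¹ =
      B⁻¹ * (B - A) * B⁻¹ + ((B - A) * B⁻¹)ᴴ * A⁻¹ * ((B - A) * B⁻¹) := by
    have hCH : (B - A)ᴴ = B - A := hAB.isHermitian.eq
    have hBH : (B⁻¹)ᴴ = B⁻¹ := hB.inv.isHermitian.eq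
    rw [conjTranspose_mul, hCH, hBH]
    calc A⁻¹ - B⁻¹ = A⁻¹ * (B - A) * B⁻¹ := h2.symm
      _ = (B⁻¹ * (B - A) + (A⁻¹ - B⁻¹) * (B - A)) * B⁻¹ := by
          rw [show B⁻¹ * (B - A) + (A⁻¹ - B⁻¹) * (B - A) = A⁻¹ * (B - A) by
            rw [Matrix.sub_mul]; abel]
      _ = (B⁻¹ * (B - A) + (B⁻¹ * (B - A) * A⁻¹) * (B - A)) * B⁻¹ := by rw [h1]
      _ = B⁻¹ * (B - A) * B⁻¹ + B⁻¹ * (B - A) * A⁻¹ * ((B - A) * B⁻¹) := by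
          rw [Matrix.add_mul]; rw [Matrix.mul_assoc (B⁻¹ * (B - A) * A⁻¹)]
  rw [key]
  have t1 : (B⁻¹ * (B - A) * B⁻¹).PosSemidef := by
    have := hAB.mul_mul_conjTranspose_same B⁻¹
    rwa [hB.inv.isHermitian.eq] at this
  have t2 : (((B - A) * B⁻¹)ᴴ * A⁻¹ * ((B - A) * B⁻¹)).PosSemidef :=
    hA.inv.posSemidef.conjTranspose_mul_mul_same ((B - A) * B⁻¹)
  exact t1.add t2

/-- channel-enhancement construction in the proof of Theorem 4 of
the paper. With `0 < α₁ ≤ α₂` and the KKT relation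
`(α₁/2)(Q₁+N₁)⁻¹ + M₁ = (α₂/2)(Q₁+N₂)⁻¹ + M₂`, the enhanced noise covariances
`Ñ₁ := ((Q₁+N₁)⁻¹ + (2/α₁)M₁)⁻¹ − Q₁` and `Ñ₂ := ((Q₁+N₂)⁻¹ + (2/α₂)M₂)⁻¹ − Q₁`
satisfy: (i) `Ñ₁ ⪯ N₁`, `Ñ₂ ⪯ N₂`; (ii) `Ñ₁ ⪯ Ñ₂`; (iii) if `Q₁M₁ = 0` then
`det(Q₁+Ñ₁)·det N₁ = det(Q₁+N₁)·det Ñ₁`; (iv) if `Q₂M₂ = 0` then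
`det(Q₁+Q₂+Ñ₂)·det(Q₁+N₂) = det(Q₁+Q₂+N₂)·det(Q₁+Ñ₂)`. -/
theorem stmt_11 {n : ℕ} (α₁ α₂ : ℝ) (hα₁ : 0 < α₁) (hα₁₂ : α₁ ≤ α₂)
    (Q₁ Q₂ M₁ M₂ N₁ N₂ Ntil₁ Ntil₂ : Matrix (Fin n) (Fin n) ℝ)
    (hQ₁ : Q₁.PosSemidef) (hQ₂ : Q₂.PosSemidef)
    (hM₁ : M₁.PosSemidef) (hM₂ : M₂.PosSemidef)
    (hN₁ : N₁.PosDef) (hN₂ : N₂.PosDef)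
    (hrel : (α₁ / 2) • (Q₁ + N₁)⁻¹ + M₁ = (α₂ / 2) • (Q₁ + N₂)⁻¹ + M₂)
    (hNtil₁ : Ntil₁ = ((Q₁ + N₁)⁻¹ + (2 / α₁) • M₁)⁻¹ - Q₁)
    (hNtil₂ : Ntil₂ = ((Q₁ + N₂)⁻¹ + (2 / α₂) • M₂)⁻¹ - Q₁) :
    (N₁ - Ntil₁).PosSemidef ∧ (N₂ - Ntil₂).PosSemidef ∧
    (Ntil₂ - Ntil₁).PosSemidef ∧
    (Q₁ * M₁ = 0 → (Q₁ + Ntil₁).det * N₁.det = (Q₁ + N₁).det * Ntil₁.det) ∧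
    (Q₂ * M₂ = 0 →
      (Q₁ + Q₂ + Ntil₂).det * (Q₁ + N₂).det = (Q₁ + Q₂ + N₂).det * (Q₁ + Ntil₂).det) := by
  have hα₂ : 0 < α₂ := lt_of_lt_of_le hα₁ hα₁₂
  -- positive definiteness of the building blocks
  have hP₁ : (Q₁ + N₁).PosDef := Matrix.PosDef.posSemidef_add hQ₁ hN₁
  have hP₂ : (Q₁ + N₂).PosDef := Matrix.PosDef.posSemidef_add hQ₁ hN₂
  set A₁ : Matrix (Fin n) (Fin n) ℝ := (Q₁ + N₁)⁻¹ with hA₁def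
  set A₂ : Matrix (Fin n) (Fin n) ℝ := (Q₁ + N₂)⁻¹ with hA₂def
  have hA₁ : A₁.PosDef := hP₁.inv
  have hA₂ : A₂.PosDef := hP₂.inv
  set B₁ : Matrix (Fin n) (Fin n) ℝ := A₁ + (2 / α₁) • M₁ with hB₁def
  set B₂ : Matrix (Fin n) (Fin n) ℝ := A₂ + (2 / α₂) • M₂ with hB₂def
  have hsM₁ : ((2 / α₁) • M₁).PosSemidef := psd_smul_aux hM₁ (by positivity)
  have hsM₂ : ((2 / α₂) • M₂).PosSemidef := psd_smul_aux hM₂ (by positivity)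
  have hB₁ : B₁.PosDef := hA₁.add_posSemidef hsM₁
  have hB₂ : B₂.PosDef := hA₂.add_posSemidef hsM₂
  have hdP₁ : IsUnit (Q₁ + N₁).det := (Matrix.isUnit_iff_isUnit_det _).1 hP₁.isUnit
  have hdP₂ : IsUnit (Q₁ + N₂).det := (Matrix.isUnit_iff_isUnit_det _).1 hP₂.isUnit
  have hdB₁ : IsUnit B₁.det := (Matrix.isUnit_iff_isUnit_det _).1 hB₁.isUnit
  have hdB₂ : IsUnit B₂.det := (Matrix.isUnit_iff_isUnit_det _).1 hB₂.isUnit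
  -- inverse of A₁, A₂
  have hiA₁ : A₁⁻¹ = Q₁ + N₁ := Matrix.nonsing_inv_nonsing_inv _ hdP₁
  have hiA₂ : A₂⁻¹ = Q₁ + N₂ := Matrix.nonsing_inv_nonsing_inv _ hdP₂
  -- (i) for user 1
  have part1 : (N₁ - Ntil₁).PosSemidef := by
    have h := inv_antitone_aux hA₁ hB₁ (by
      have : B₁ - A₁ = (2 / α₁) • M₁ := by rw [hB₁def]; abel
      rw [this]; exact hsM₁)
    rw [hiA₁] at h
    have : N₁ - Ntil₁ = Q₁ + N₁ - B₁⁻¹ := by rw [hNtil₁]; abel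
    rw [this]; exact h
  have part2 : (N₂ - Ntil₂).PosSemidef := by
    have h := inv_antitone_aux hA₂ hB₂ (by
      have : B₂ - A₂ = (2 / α₂) • M₂ := by rw [hB₂def]; abel
      rw [this]; exact hsM₂)
    rw [hiA₂] at h
    have : N₂ - Ntil₂ = Q₁ + N₂ - B₂⁻¹ := by rw [hNtil₂]; abel
    rw [this]; exact h
  -- (ii)
  have hM₁eq : M₁ = (α₂ / 2) • A₂ + M₂ - (α₁ / 2) • A₁ := by
    rw [← hrel]; abel
  have hdiff : B₁ - B₂ = (α₂ / α₁ - 1) • A₂ + (2 / α₁ - 2 / α₂) • M₂ := by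
    rw [hB₁def, hB₂def, hM₁eq]
    match_scalars <;> field_simp <;> ring
  have part3 : (Ntil₂ - Ntil₁).PosSemidef := by
    have hBB : (B₁ - B₂).PosSemidef := by
      rw [hdiff]
      exact (psd_smul_aux hA₂.posSemidef (by
        rw [sub_nonneg]; exact (one_le_div hα₁).2 hα₁₂)).add
        (psd_smul_aux hM₂ (by
          rw [sub_nonneg]
          exact div_le_div_of_nonneg_left (by norm_num) hα₁ hα₁₂))
    have h := inv_antitone_aux hB₂ hB₁ hBB
    have : Ntil₂ - Ntil₁ = B₂⁻¹ - B₁⁻¹ := by rw [hNtil₁, hNtil₂]; abel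
    rw [this]; exact h
  refine ⟨part1, part2, part3, ?_, ?_⟩
  -- (iii)
  · intro hQM
    have e1 : Q₁ + Ntil₁ = B₁⁻¹ := by rw [hNtil₁]; abel
    have e2 : Ntil₁ * B₁ = N₁ * A₁ := by
      have hQB : Q₁ * B₁ = Q₁ * A₁ := by
        rw [hB₁def, Matrix.mul_add, Matrix.mul_smul, hQM, smul_zero, add_zero]
      rw [hNtil₁, Matrix.sub_mul, Matrix.nonsing_inv_mul B₁ hdB₁, hQB]
      have hN₁A : N₁ * A₁ = (Q₁ + N₁) * A₁ - Q₁ * A₁ := by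
        rw [Matrix.add_mul]; abel
      rw [hN₁A, Matrix.mul_nonsing_inv _ hdP₁]
    have h1det : (Q₁ + Ntil₁).det * B₁.det = 1 := by
      rw [e1, ← det_mul, Matrix.nonsing_inv_mul B₁ hdB₁, det_one]
    have h2det : (Q₁ + N₁).det * A₁.det = 1 := by
      rw [← det_mul, Matrix.mul_nonsing_inv _ hdP₁, det_one]
    have e2d : Ntil₁.det * B₁.det = N₁.det * A₁.det := by
      rw [← det_mul, ← det_mul, e2]
    have hba : B₁.det * A₁.det ≠ 0 := mul_ne_zero hB₁.det_pos.ne' hA₁.det_pos.ne'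
    apply mul_right_cancel₀ hba
    calc (Q₁ + Ntil₁).det * N₁.det * (B₁.det * A₁.det)
        = ((Q₁ + Ntil₁).det * B₁.det) * (N₁.det * A₁.det) := by ring
      _ = 1 * (Ntil₁.det * B₁.det) := by rw [h1det, ← e2d]
      _ = ((Q₁ + N₁).det * A₁.det) * (Ntil₁.det * B₁.det) := by rw [h2det]
      _ = (Q₁ + N₁).det * Ntil₁.det * (B₁.det * A₁.det) := by ring
  -- (iv)
  · intro hQM
    have e1 : Q₁ + Ntil₂ = B₂⁻¹ := by rw [hNtil₂]; abel
    have e2 : (Q₁ + Q₂ + Ntil₂) * B₂ = (Q₁ + Q₂ + N₂) * A₂ := by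
      have hQB : Q₂ * B₂ = Q₂ * A₂ := by
        rw [hB₂def, Matrix.mul_add, Matrix.mul_smul, hQM, smul_zero, add_zero]
      have hL : Q₁ + Q₂ + Ntil₂ = Q₂ + B₂⁻¹ := by rw [hNtil₂]; abel
      have hR : Q₁ + Q₂ + N₂ = Q₂ + (Q₁ + N₂) := by abel
      rw [hL, hR, Matrix.add_mul, Matrix.add_mul, Matrix.nonsing_inv_mul B₂ hdB₂,
        Matrix.mul_nonsing_inv _ hdP₂, hQB]
    have h1det : (Q₁ + Ntil₂).det * B₂.det = 1 := by
      rw [e1, ← det_mul, Matrix.nonsing_inv_mul B₂ hdB₂, det_one]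
    have h2det : (Q₁ + N₂).det * A₂.det = 1 := by
      rw [← det_mul, Matrix.mul_nonsing_inv _ hdP₂, det_one]
    have e2d : (Q₁ + Q₂ + Ntil₂).det * B₂.det = (Q₁ + Q₂ + N₂).det * A₂.det := by
      rw [← det_mul, ← det_mul, e2]
    have hba : B₂.det * A₂.det ≠ 0 := mul_ne_zero hB₂.det_pos.ne' hA₂.det_pos.ne'
    apply mul_right_cancel₀ hba
    calc (Q₁ + Q₂ + Ntil₂).det * (Q₁ + N₂).det * (B₂.det * A₂.det)
        = ((Q₁ + Q₂ + Ntil₂).det * B₂.det) * ((Q₁ + N₂).det * A₂.det) := by ring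
      _ = ((Q₁ + Q₂ + N₂).det * A₂.det) * 1 := by rw [e2d, h2det]
      _ = ((Q₁ + Q₂ + N₂).det * A₂.det) * ((Q₁ + Ntil₂).det * B₂.det) := by rw [h1det]
      _ = (Q₁ + Q₂ + N₂).det * (Q₁ + Ntil₂).det * (B₂.det * A₂.det) := by ring
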